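/- For every bipartite graph G with m edges, ρ(G) = √m holds if and only if G is a disjoint union of a complete bipartite graph K_{a,b} with ab = m and isolated vertices. -/
import Mathlib


open Matrix SimpleGraph

open Classical in
/-- The adjacency matrix of a simple graph over `ℝ`. -/
noncomputable def adjMat {V : Type} [Fintype V] (G : SimpleGraph V) : Matrix V V ℝ :=
  fun u v => if G.Adj u v then (1 : ℝ) else 0

/-- `ρ` is the spectral radius (largest real eigenvalue) of the adjacency matrix of `G`. -/
def IsSpecRad {V : Type} [Fintype V] (G : SimpleGraph V) (ρ : ℝ) : Prop :=
  (∃ x : V → ℝ, x ≠ 0 ∧ adjMat G *ᵥ x = ρ • x) ∧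
  ∀ μ : ℝ, (∃ x : V → ℝ, x ≠ 0 ∧ adjMat G *ᵥ x = μ • x) → μ ≤ ρ

/-- `G` contains a copy of `F` as a (not necessarily induced) subgraph. -/
def ContainsSub {α β : Type} (F : SimpleGraph α) (G : SimpleGraph β) : Prop :=
  ∃ f : F →g G, Function.Injective f


open Classical in
noncomputable def nbrs {V : Type} [Fintype V] (G : SimpleGraph V) (u : V) : Finset V :=
  Finset.univ.filter (fun v => G.Adj u v)

lemma mem_nbrs {V : Type} [Fintype V] (G : SimpleGraph V) (u v : V) :
    v ∈ nbrs G u ↔ G.Adj u v := by simp [nbrs]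

open Classical in
noncomputable def edges' {V : Type} [Fintype V] (G : SimpleGraph V) : Finset (Sym2 V) :=
  Finset.univ.filter (fun e => e ∈ G.edgeSet)

lemma mem_edges' {V : Type} [Fintype V] (G : SimpleGraph V) (e : Sym2 V) :
    e ∈ edges' G ↔ e ∈ G.edgeSet := by simp [edges']

lemma card_edges' {V : Type} [Fintype V] (G : SimpleGraph V) :
    (edges' G).card = G.edgeSet.ncard := by
  classical
  rw [Set.ncard_eq_toFinset_card']
  congr 1
  ext e
  simp [edges']

lemma adjMat_mulVec_apply {V : Type} [Fintype V] (G : SimpleGraph V) (x : V → ℝ) (u : V) :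
    (adjMat G *ᵥ x) u = ∑ v ∈ nbrs G u, x v := by
  classical
  simp only [mulVec, dotProduct, adjMat, nbrs, Finset.sum_filter, ite_mul, one_mul, zero_mul]

lemma nbrs_indep {V : Type} [Fintype V] {G : SimpleGraph V} (hbip : G.Colorable 2) {u v w : V}
    (hv : G.Adj u v) (hw : G.Adj u w) : ¬ G.Adj v w := by
  obtain ⟨c⟩ := hbip
  intro h
  have h1 := c.valid hv
  have h2 := c.valid hw
  have h3 := c.valid h
  have key : ∀ a b d : Fin 2, a ≠ b → a ≠ d → b ≠ d → False := by decide
  exact key (c u) (c v) (c w) h1 h2 h3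

lemma sigma_maps {V : Type} [Fintype V] (G : SimpleGraph V) (u : V) :
    ∀ p ∈ (nbrs G u).sigma (fun v => nbrs G v),
      (fun p : Σ _ : V, V => s(p.1, p.2)) p ∈ edges' G := by
  rintro ⟨v, w⟩ hp
  rw [Finset.mem_sigma] at hp
  rw [mem_edges', SimpleGraph.mem_edgeSet]
  exact (mem_nbrs G v w).mp hp.2

lemma sigma_injOn {V : Type} [Fintype V] {G : SimpleGraph V} (hbip : G.Colorable 2) (u : V) :
    Set.InjOn (fun p : Σ _ : V, V => s(p.1, p.2))
      ((nbrs G u).sigma (fun v => nbrs G v)) := by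
  rintro ⟨v, w⟩ hp ⟨v', w'⟩ hq hf
  simp only [Finset.coe_sigma, Set.mem_sigma_iff, Finset.mem_coe, mem_nbrs] at hp hq
  simp only [Sym2.eq_iff] at hf
  rcases hf with ⟨rfl, rfl⟩ | ⟨rfl, rfl⟩
  · rfl
  · exact absurd hp.2 (nbrs_indep hbip hp.1 hq.1)

lemma card_sigma_le {V : Type} [Fintype V] {G : SimpleGraph V} (hbip : G.Colorable 2) (u : V) :
    ((nbrs G u).sigma (fun v => nbrs G v)).card ≤ (edges' G).card :=
  Finset.card_le_card_of_injOn _ (sigma_maps G u) (sigma_injOn hbip u)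

lemma eig_sq_le {V : Type} [Fintype V] (G : SimpleGraph V) (m : ℕ)
    (hm : G.edgeSet.ncard = m) (hbip : G.Colorable 2) (μ : ℝ) (x : V → ℝ) (hx : x ≠ 0)
    (heig : adjMat G *ᵥ x = μ • x) : μ ^ 2 ≤ (m : ℝ) := by
  classical
  obtain ⟨u0, hu0⟩ : ∃ u, x u ≠ 0 := by
    by_contra h; push_neg at h; exact hx (funext h)
  obtain ⟨u, -, hu⟩ := Finset.exists_max_image Finset.univ (fun v => |x v|)
    ⟨u0, Finset.mem_univ u0⟩
  have hMpos : 0 < |x u| := lt_of_lt_of_le (abs_pos.mpr hu0) (hu u0 (Finset.mem_univ u0))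
  have h2 : adjMat G *ᵥ (adjMat G *ᵥ x) = (μ ^ 2) • x := by
    rw [heig, mulVec_smul, heig, smul_smul, ← sq]
  set T := (nbrs G u).sigma (fun v => nbrs G v) with hT
  have key : μ ^ 2 * x u = ∑ p ∈ T, x p.2 := by
    have := congrFun h2 u
    rw [adjMat_mulVec_apply] at this
    rw [Pi.smul_apply, smul_eq_mul] at this
    rw [← this, hT]
    rw [show (∑ v ∈ nbrs G u, (adjMat G *ᵥ x) v) = ∑ v ∈ nbrs G u, ∑ w ∈ nbrs G v, x w from
      Finset.sum_congr rfl fun v _ => adjMat_mulVec_apply G x v]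
    exact Finset.sum_sigma' (nbrs G u) _ (fun _ w => x w)
  have hcard : (T.card : ℝ) ≤ (m : ℝ) := by
    have := card_sigma_le hbip u
    rw [card_edges', hm] at this
    exact_mod_cast this
  have hchain : μ ^ 2 * |x u| ≤ (m : ℝ) * |x u| := by
    calc μ ^ 2 * |x u| = |μ ^ 2 * x u| := by
          rw [abs_mul, abs_of_nonneg (sq_nonneg μ)]
      _ = |∑ p ∈ T, x p.2| := by rw [key]
      _ ≤ ∑ p ∈ T, |x p.2| := Finset.abs_sum_le_sum_abs _ _
      _ ≤ ∑ _p ∈ T, |x u| := Finset.sum_le_sum fun p _ => hu p.2 (Finset.mem_univ _)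
      _ = (T.card : ℝ) * |x u| := by rw [Finset.sum_const, nsmul_eq_mul]
      _ ≤ (m : ℝ) * |x u| := by
          exact mul_le_mul_of_nonneg_right hcard (abs_nonneg _)
  exact le_of_mul_le_mul_right hchain hMpos

lemma forward_structure {V : Type} [Fintype V] [DecidableEq V] (G : SimpleGraph V) (m : ℕ)
    (hm : G.edgeSet.ncard = m) (hbip : G.Colorable 2) (hm1 : 1 ≤ m)
    (x : V → ℝ) (hx : x ≠ 0) (heig : adjMat G *ᵥ x = Real.sqrt m • x) :
    ∃ A B : Finset V, Disjoint A B ∧ A.card * B.card = m ∧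
      ∀ u v : V, G.Adj u v ↔ ((u ∈ A ∧ v ∈ B) ∨ (u ∈ B ∧ v ∈ A)) := by
  classical
  set ρ := Real.sqrt m with hρdef
  have hmnn : (0:ℝ) ≤ m := Nat.cast_nonneg m
  have hρsq : ρ ^ 2 = m := Real.sq_sqrt hmnn
  have hρpos : 0 < ρ := Real.sqrt_pos.mpr (by exact_mod_cast hm1)
  -- WLOG the maximal-absolute-value entry is positive
  obtain ⟨y, heig', u, hupos, humax⟩ :
      ∃ y : V → ℝ, adjMat G *ᵥ y = ρ • y ∧ ∃ u, 0 < y u ∧ ∀ v, |y v| ≤ y u := by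
    obtain ⟨u0, hu0⟩ : ∃ u, x u ≠ 0 := by
      by_contra h; push_neg at h; exact hx (funext h)
    obtain ⟨u, -, hu⟩ := Finset.exists_max_image Finset.univ (fun v => |x v|)
      ⟨u0, Finset.mem_univ u0⟩
    have hMpos : 0 < |x u| := lt_of_lt_of_le (abs_pos.mpr hu0) (hu u0 (Finset.mem_univ u0))
    rcases le_or_gt 0 (x u) with h | h
    · refine ⟨x, heig, u, ?_, ?_⟩
      · rwa [abs_of_nonneg h] at hMpos
      · intro v; have := hu v (Finset.mem_univ v); rwa [abs_of_nonneg h] at this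
    · refine ⟨-x, ?_, u, ?_, ?_⟩
      · rw [Matrix.mulVec_neg, heig, smul_neg]
      · simpa using neg_pos.mpr h
      · intro v
        have := hu v (Finset.mem_univ v)
        rw [abs_of_neg h] at this
        simpa [abs_neg] using this
  clear hx heig
  set T := (nbrs G u).sigma (fun v => nbrs G v) with hT
  have key : (m:ℝ) * y u = ∑ p ∈ T, y p.2 := by
    have h2 : adjMat G *ᵥ (adjMat G *ᵥ y) = (ρ ^ 2) • y := by
      rw [heig', mulVec_smul, heig', smul_smul, ← sq]
    have := congrFun h2 u
    rw [adjMat_mulVec_apply, Pi.smul_apply, smul_eq_mul, hρsq] at this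
    rw [← this, hT]
    rw [show (∑ v ∈ nbrs G u, (adjMat G *ᵥ y) v) = ∑ v ∈ nbrs G u, ∑ w ∈ nbrs G v, y w from
      Finset.sum_congr rfl fun v _ => adjMat_mulVec_apply G y v]
    exact Finset.sum_sigma' (nbrs G u) _ (fun _ w => y w)
  have hcard_le : T.card ≤ m := by
    have := card_sigma_le hbip u; rwa [card_edges', hm] at this
  have hterm : ∀ p ∈ T, y p.2 ≤ y u := fun p _ => le_trans (le_abs_self _) (humax p.2)
  have hTm : T.card = m := by
    have h1 : (m:ℝ) * y u ≤ (T.card : ℝ) * y u := by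
      rw [key]
      calc ∑ p ∈ T, y p.2 ≤ ∑ _p ∈ T, y u := Finset.sum_le_sum hterm
        _ = (T.card : ℝ) * y u := by rw [Finset.sum_const, nsmul_eq_mul]
    have h2 : (m:ℝ) ≤ (T.card : ℝ) := le_of_mul_le_mul_right h1 hupos
    have h3 : m ≤ T.card := by exact_mod_cast h2
    omega
  have hall : ∀ p ∈ T, y p.2 = y u := by
    have hzero : ∑ p ∈ T, (y u - y p.2) = 0 := by
      rw [Finset.sum_sub_distrib, Finset.sum_const, hTm, nsmul_eq_mul, ← key, sub_self]
    intro p hp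
    have := (Finset.sum_eq_zero_iff_of_nonneg
      (fun p hp => sub_nonneg.mpr (hterm p hp))).mp hzero p hp
    linarith
  have himg : T.image (fun p : Σ _ : V, V => s(p.1, p.2)) = edges' G := by
    apply Finset.eq_of_subset_of_card_le
    · intro e he
      obtain ⟨p, hp, rfl⟩ := Finset.mem_image.mp he
      exact sigma_maps G u p hp
    · rw [Finset.card_image_of_injOn (sigma_injOn hbip u), hTm, card_edges', hm]
  have hedge : ∀ a b : V, G.Adj a b →
      ∃ v w, v ∈ nbrs G u ∧ w ∈ nbrs G v ∧ s(a,b) = s(v,w) := by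
    intro a b hab
    have h1 : s(a,b) ∈ edges' G := (mem_edges' G _).mpr (G.mem_edgeSet.mpr hab)
    rw [← himg] at h1
    obtain ⟨⟨v,w⟩, hp, he⟩ := Finset.mem_image.mp h1
    rw [Finset.mem_sigma] at hp
    exact ⟨v, w, hp.1, hp.2, he.symm⟩
  set B := nbrs G u with hB
  set A := Finset.univ.filter (fun w => ∃ v ∈ B, G.Adj v w) with hA
  have hmemA : ∀ w, w ∈ A ↔ ∃ v ∈ B, G.Adj v w := by intro w; simp [hA]
  have hAval : ∀ a ∈ A, y a = y u := by
    intro a ha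
    obtain ⟨v, hv, hva⟩ := (hmemA a).mp ha
    exact hall ⟨v, a⟩ (Finset.mem_sigma.mpr ⟨hv, (mem_nbrs G v a).mpr hva⟩)
  have hdisj : Disjoint A B := by
    rw [Finset.disjoint_left]
    intro a ha hb
    obtain ⟨v, hv, hva⟩ := (hmemA a).mp ha
    exact nbrs_indep hbip ((mem_nbrs G u v).mp hv) ((mem_nbrs G u a).mp hb) hva
  have hsplit : ∀ a b : V, G.Adj a b → (a ∈ B ∧ b ∈ A) ∨ (a ∈ A ∧ b ∈ B) := by
    intro a b hab
    obtain ⟨v, w, hv, hw, he⟩ := hedge a b hab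
    have hwA : w ∈ A := (hmemA w).mpr ⟨v, hv, (mem_nbrs G v w).mp hw⟩
    rcases Sym2.eq_iff.mp he with ⟨rfl, rfl⟩ | ⟨rfl, rfl⟩
    · exact Or.inl ⟨hv, hwA⟩
    · exact Or.inr ⟨hwA, hv⟩
  have hNa : ∀ a ∈ A, nbrs G a ⊆ B := by
    intro a ha w hw
    rcases hsplit a w ((mem_nbrs G a w).mp hw) with ⟨haB, _⟩ | ⟨_, hwB⟩
    · exact absurd haB (Finset.disjoint_left.mp hdisj ha)
    · exact hwB
  have hxB : ∀ v ∈ B, ρ * y v = ((nbrs G v).card : ℝ) * y u := by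
    intro v hv
    have he := congrFun heig' v
    rw [adjMat_mulVec_apply, Pi.smul_apply, smul_eq_mul] at he
    rw [← he]
    rw [show ∑ w ∈ nbrs G v, y w = ∑ _w ∈ nbrs G v, y u from Finset.sum_congr rfl fun w hw =>
      hall ⟨v, w⟩ (Finset.mem_sigma.mpr ⟨hv, hw⟩)]
    rw [Finset.sum_const, nsmul_eq_mul]
  have hSB : ∑ v ∈ B, (nbrs G v).card = m := by
    rw [← hTm, hT, Finset.card_sigma]
  have hdegpos : ∀ v ∈ B, 0 < (nbrs G v).card := by
    intro v hv
    exact Finset.card_pos.mpr ⟨u, (mem_nbrs G v u).mpr ((mem_nbrs G u v).mp hv).symm⟩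
  have hsum_a : ∀ a ∈ A, ∑ w ∈ nbrs G a, (nbrs G w).card = m := by
    intro a ha
    have he := congrFun heig' a
    rw [adjMat_mulVec_apply, Pi.smul_apply, smul_eq_mul, hAval a ha] at he
    have h2 : ∑ w ∈ nbrs G a, ρ * y w = ρ * (ρ * y u) := by rw [← Finset.mul_sum, he]
    have h3 : (∑ w ∈ nbrs G a, ((nbrs G w).card : ℝ)) * y u = (m:ℝ) * y u := by
      rw [Finset.sum_mul]
      calc ∑ w ∈ nbrs G a, ((nbrs G w).card : ℝ) * y u
          = ∑ w ∈ nbrs G a, ρ * y w :=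
            Finset.sum_congr rfl fun w hw => (hxB w (hNa a ha hw)).symm
        _ = ρ * (ρ * y u) := h2
        _ = (m:ℝ) * y u := by rw [← mul_assoc, ← sq, hρsq]
    have h4 : (∑ w ∈ nbrs G a, ((nbrs G w).card : ℝ)) = (m:ℝ) :=
      mul_right_cancel₀ (ne_of_gt hupos) h3
    exact_mod_cast h4
  have hcomplete : ∀ a ∈ A, ∀ b ∈ B, G.Adj a b := by
    intro a ha b hb
    by_contra hab
    have hbn : b ∉ nbrs G a := fun h => hab ((mem_nbrs G a b).mp h)
    have hlt := Finset.sum_lt_sum_of_subset (f := fun w => (nbrs G w).card)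
      (hNa a ha) hb hbn (hdegpos b hb) (fun j _ _ => Nat.zero_le _)
    rw [hsum_a a ha, hSB] at hlt
    exact lt_irrefl m hlt
  have hiff : ∀ a b : V, G.Adj a b ↔ ((a ∈ A ∧ b ∈ B) ∨ (a ∈ B ∧ b ∈ A)) := by
    intro a b
    constructor
    · intro h
      rcases hsplit a b h with ⟨h1, h2⟩ | ⟨h1, h2⟩
      · exact Or.inr ⟨h1, h2⟩
      · exact Or.inl ⟨h1, h2⟩
    · rintro (⟨h1, h2⟩ | ⟨h1, h2⟩)
      · exact hcomplete a h1 b h2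
      · exact (hcomplete b h2 a h1).symm
  have hprodinj : Set.InjOn (fun p : V × V => s(p.1, p.2)) (↑(A ×ˢ B) : Set (V × V)) := by
    rintro ⟨a, b⟩ hp ⟨a', b'⟩ hq hf
    simp only [Finset.mem_coe, Finset.mem_product] at hp hq
    rcases Sym2.eq_iff.mp hf with ⟨rfl, rfl⟩ | ⟨rfl, rfl⟩
    · rfl
    · exact absurd hq.2 (Finset.disjoint_left.mp hdisj hp.1)
  have himg2 : (A ×ˢ B).image (fun p : V × V => s(p.1, p.2)) = edges' G := by
    apply Finset.Subset.antisymm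
    · intro e he
      obtain ⟨⟨a, b⟩, hp, rfl⟩ := Finset.mem_image.mp he
      rw [Finset.mem_product] at hp
      exact (mem_edges' G _).mpr (G.mem_edgeSet.mpr (hcomplete a hp.1 b hp.2))
    · intro e he
      induction e using Sym2.ind with
      | _ a b =>
        have hab : G.Adj a b := G.mem_edgeSet.mp ((mem_edges' G _).mp he)
        rcases hsplit a b hab with ⟨h1, h2⟩ | ⟨h1, h2⟩
        · exact Finset.mem_image.mpr ⟨(b, a), Finset.mem_product.mpr ⟨h2, h1⟩, Sym2.eq_swap⟩
        · exact Finset.mem_image.mpr ⟨(a, b), Finset.mem_product.mpr ⟨h1, h2⟩, rfl⟩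
  have hcardm : A.card * B.card = m := by
    have h5 := Finset.card_image_of_injOn hprodinj
    rw [himg2, card_edges', hm, Finset.card_product] at h5
    exact h5.symm
  exact ⟨A, B, hdisj, hcardm, hiff⟩

lemma rho_le_sqrt {V : Type} [Fintype V] (G : SimpleGraph V) (m : ℕ)
    (hm : G.edgeSet.ncard = m) (hbip : G.Colorable 2) (ρ : ℝ) (hρ : IsSpecRad G ρ) :
    ρ ≤ Real.sqrt m := by
  obtain ⟨x, hx, heig⟩ := hρ.1
  have h := eig_sq_le G m hm hbip ρ x hx heig
  calc ρ ≤ |ρ| := le_abs_self ρ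
    _ = Real.sqrt (ρ ^ 2) := (Real.sqrt_sq_eq_abs ρ).symm
    _ ≤ Real.sqrt m := Real.sqrt_le_sqrt h

lemma backward_eig {V : Type} [Fintype V] [DecidableEq V] (G : SimpleGraph V) (m : ℕ)
    (hm1 : 1 ≤ m) (A B : Finset V) (hd : Disjoint A B) (hab : A.card * B.card = m)
    (hiff : ∀ u v : V, G.Adj u v ↔ ((u ∈ A ∧ v ∈ B) ∨ (u ∈ B ∧ v ∈ A))) :
    ∃ x : V → ℝ, x ≠ 0 ∧ adjMat G *ᵥ x = Real.sqrt m • x := by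
  classical
  set a := A.card with ha
  set b := B.card with hb
  have hapos : 0 < a := by
    rcases Nat.eq_zero_or_pos a with h | h
    · rw [h, zero_mul] at hab; omega
    · exact h
  have hbpos : 0 < b := by
    rcases Nat.eq_zero_or_pos b with h | h
    · rw [h, mul_zero] at hab; omega
    · exact h
  set x : V → ℝ := fun w => if w ∈ A then Real.sqrt b else if w ∈ B then Real.sqrt a else 0
    with hxdef
  have hsab : Real.sqrt m = Real.sqrt a * Real.sqrt b := by
    rw [← hab]
    push_cast
    exact Real.sqrt_mul (Nat.cast_nonneg a) b
  have hnbr : ∀ p : V, nbrs G p = if p ∈ A then B else if p ∈ B then A else ∅ := by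
    intro p
    ext w
    rw [mem_nbrs, hiff]
    split_ifs with h1 h2
    · constructor
      · rintro (⟨-, hw⟩ | ⟨hpB, -⟩)
        · exact hw
        · exact absurd hpB (Finset.disjoint_left.mp hd h1)
      · intro hw; exact Or.inl ⟨h1, hw⟩
    · constructor
      · rintro (⟨hpA, -⟩ | ⟨-, hw⟩)
        · exact absurd hpA h1
        · exact hw
      · intro hw; exact Or.inr ⟨h2, hw⟩
    · simp only [Finset.notMem_empty, iff_false]
      rintro (⟨hpA, -⟩ | ⟨hpB, -⟩)
      · exact h1 hpA
      · exact h2 hpB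
  refine ⟨x, ?_, ?_⟩
  · obtain ⟨a0, ha0⟩ := Finset.card_pos.mp hapos
    intro h
    have := congrFun h a0
    rw [hxdef] at this
    simp only [ha0, if_pos, Pi.zero_apply] at this
    exact absurd this (ne_of_gt (Real.sqrt_pos.mpr (by exact_mod_cast hbpos)))
  · funext p
    rw [adjMat_mulVec_apply, hnbr p, Pi.smul_apply, smul_eq_mul]
    by_cases h1 : p ∈ A
    · have hpB : p ∉ B := Finset.disjoint_left.mp hd h1
      rw [if_pos h1]
      have : ∀ w ∈ B, x w = Real.sqrt a := by
        intro w hw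
        have hwA : w ∉ A := Finset.disjoint_right.mp hd hw
        simp only [hxdef, hwA, if_neg, if_false, hw, if_pos, if_true]
      rw [Finset.sum_congr rfl this, Finset.sum_const, nsmul_eq_mul]
      have hxp : x p = Real.sqrt b := by simp only [hxdef, h1, if_pos]
      rw [hxp, hsab]
      rw [show Real.sqrt a * Real.sqrt b * Real.sqrt b = Real.sqrt a * (Real.sqrt b * Real.sqrt b) from mul_assoc _ _ _]
      rw [Real.mul_self_sqrt (Nat.cast_nonneg b)]
      ring
    · rw [if_neg h1]
      by_cases h2 : p ∈ B
      · rw [if_pos h2]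
        have : ∀ w ∈ A, x w = Real.sqrt b := by
          intro w hw
          simp only [hxdef, hw, if_pos, if_true]
        rw [Finset.sum_congr rfl this, Finset.sum_const, nsmul_eq_mul]
        have hxp : x p = Real.sqrt a := by simp only [hxdef, h1, if_neg, if_false, h2, if_pos]
        rw [hxp, hsab]
        rw [show Real.sqrt a * Real.sqrt b * Real.sqrt a
          = Real.sqrt a * Real.sqrt a * Real.sqrt b from by ring]
        rw [Real.mul_self_sqrt (Nat.cast_nonneg a)]
      · rw [if_neg h2, Finset.sum_empty]
        have hxp : x p = 0 := by simp only [hxdef, h1, if_neg, if_false, h2]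
        rw [hxp, mul_zero]

/-- For a bipartite graph `G` with `m` edges, `ρ(G) = √m` iff `G` is the
disjoint union of a complete bipartite graph `K_{a,b}` with `a*b = m` and isolated vertices. -/
theorem bipartite_specRad_eq_sqrt_iff {V : Type} [Fintype V] [DecidableEq V]
    (G : SimpleGraph V) (m : ℕ) (hm : G.edgeSet.ncard = m) (hbip : G.Colorable 2)
    (ρ : ℝ) (hρ : IsSpecRad G ρ) :
    ρ = Real.sqrt m ↔
      ∃ A B : Finset V, Disjoint A B ∧ A.card * B.card = m ∧
        ∀ u v : V, G.Adj u v ↔ ((u ∈ A ∧ v ∈ B) ∨ (u ∈ B ∧ v ∈ A)) := by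
  classical
  constructor
  · intro hρm
    rcases Nat.eq_zero_or_pos m with hm0 | hm1
    · subst hm0
      have hempty : G.edgeSet = ∅ := (Set.ncard_eq_zero (Set.toFinite _)).mp hm
      refine ⟨∅, ∅, Finset.disjoint_empty_left _, by simp, ?_⟩
      intro u v
      simp only [Finset.notMem_empty, false_and, and_false, or_self, iff_false]
      intro h
      have hmem : s(u,v) ∈ G.edgeSet := G.mem_edgeSet.mpr h
      rw [hempty] at hmem
      exact hmem
    · obtain ⟨x, hx, heig⟩ := hρ.1
      rw [hρm] at heig
      exact forward_structure G m hm hbip hm1 x hx heig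
  · rintro ⟨A, B, hd, hab, hiff⟩
    rcases Nat.eq_zero_or_pos m with hm0 | hm1
    · subst hm0
      have hadj : ∀ u v, ¬ G.Adj u v := by
        intro u v h
        rcases Nat.mul_eq_zero.mp hab with hA | hB
        · have hAe : A = ∅ := Finset.card_eq_zero.mp hA
          rcases (hiff u v).mp h with ⟨h1, h2⟩ | ⟨h1, h2⟩
          · exact absurd h1 (by simp [hAe])
          · exact absurd h2 (by simp [hAe])
        · have hBe : B = ∅ := Finset.card_eq_zero.mp hB
          rcases (hiff u v).mp h with ⟨h1, h2⟩ | ⟨h1, h2⟩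
          · exact absurd h2 (by simp [hBe])
          · exact absurd h1 (by simp [hBe])
      have hA0 : adjMat G = 0 := by
        funext u v
        simp [adjMat, hadj u v]
      obtain ⟨x, hx, heig⟩ := hρ.1
      rw [hA0, Matrix.zero_mulVec] at heig
      obtain ⟨i, hi⟩ : ∃ i, x i ≠ 0 := by
        by_contra h; push_neg at h; exact hx (funext h)
      have h0 := congrFun heig i
      rw [Pi.smul_apply, smul_eq_mul, Pi.zero_apply] at h0
      have hρ0 : ρ = 0 := by
        rcases mul_eq_zero.mp h0.symm with h | h
        · exact h
        · exact absurd h hi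
      simp [hρ0]
    · obtain ⟨x, hx, heig⟩ := backward_eig G m hm1 A B hd hab hiff
      have h1 : Real.sqrt m ≤ ρ := hρ.2 _ ⟨x, hx, heig⟩
      have h2 : ρ ≤ Real.sqrt m := rho_le_sqrt G m hm hbip ρ hρ
      linarith
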